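/- Let σ > 0 and ε > 0, and set δ = Φ(−εσ + 1/(2σ)) − e^ε · Φ(−εσ − 1/(2σ)), where Φ is the standard Gaussian CDF. Then for every measurable set S ⊆ ℝ, (gaussianReal 0 σ²)(S) ≤ e^ε · (gaussianReal 1 σ²)(S) + δ. -/

import Mathlib

open MeasureTheory ProbabilityTheory

/-- The standard Gaussian cumulative distribution function. -/
noncomputable def stdGaussianCDF (x : ℝ) : ℝ := (gaussianReal 0 1 (Set.Iic x)).toReal

open Real

lemma myvar_eq (σ : ℝ) (hσ : 0 < σ) :
    (NNReal.mk (σ^2) (sq_nonneg σ) * 1 : NNReal) = Real.toNNReal (σ^2) := by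
  rw [← NNReal.coe_inj]
  simp [Real.coe_toNNReal _ (sq_nonneg σ)]

lemma gauss_map (σ : ℝ) (hσ : 0 < σ) (μ : ℝ) :
    (gaussianReal 0 1).map (fun x => σ * x + μ) = gaussianReal μ (Real.toNNReal (σ^2)) := by
  have h1 : (gaussianReal 0 1).map (σ * ·) = gaussianReal 0 (Real.toNNReal (σ^2)) := by
    rw [gaussianReal_map_const_mul σ, mul_zero, myvar_eq σ hσ]
  have h2 : ((· + μ) ∘ (σ * ·)) = fun x => σ * x + μ := by ext x; simp
  rw [← h2, ← Measure.map_map (by fun_prop) (by fun_prop), h1,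
    gaussianReal_map_add_const μ, zero_add]

lemma gauss_Iic (σ : ℝ) (hσ : 0 < σ) (μ t : ℝ) :
    gaussianReal μ (Real.toNNReal (σ^2)) (Set.Iic t)
      = gaussianReal 0 1 (Set.Iic ((t - μ)/σ)) := by
  rw [← gauss_map σ hσ μ, Measure.map_apply (by fun_prop) measurableSet_Iic]
  congr 1
  ext x
  simp only [Set.mem_preimage, Set.mem_Iic, le_div_iff₀ hσ]
  constructor <;> intro h <;> nlinarith

lemma pdf_compare (σ ε x : ℝ) (hσ : 0 < σ) (hx : 1/2 - ε * σ^2 ≤ x) :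
    gaussianPDFReal 0 (Real.toNNReal (σ^2)) x
      ≤ Real.exp ε * gaussianPDFReal 1 (Real.toNNReal (σ^2)) x := by
  have hv : ((Real.toNNReal (σ^2) : NNReal) : ℝ) = σ^2 := Real.coe_toNNReal _ (sq_nonneg σ)
  simp only [gaussianPDFReal, hv, sub_zero]
  have hC : (0:ℝ) < (Real.sqrt (2 * π * σ^2))⁻¹ := by positivity
  have h2v : (0:ℝ) < 2 * σ^2 := by positivity
  have hle : rexp (-x^2 / (2 * σ^2)) ≤ rexp (-(x-1)^2 / (2 * σ^2)) * rexp ε := by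
    rw [← Real.exp_add]
    apply Real.exp_le_exp.mpr
    rw [← sub_nonneg]
    have heq : -(x - 1)^2 / (2 * σ^2) + ε - (-x^2 / (2 * σ^2))
        = (2 * σ^2 * ε + x^2 - (x-1)^2) / (2 * σ^2) := by field_simp; ring
    rw [heq]
    apply div_nonneg _ h2v.le
    nlinarith
  exact le_of_le_of_eq (mul_le_mul_of_nonneg_left hle hC.le) (by ring)

lemma pdf_compare' (σ ε x : ℝ) (hσ : 0 < σ) (hx : x ≤ 1/2 - ε * σ^2) :
    Real.exp ε * gaussianPDFReal 1 (Real.toNNReal (σ^2)) x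
      ≤ gaussianPDFReal 0 (Real.toNNReal (σ^2)) x := by
  have hv : ((Real.toNNReal (σ^2) : NNReal) : ℝ) = σ^2 := Real.coe_toNNReal _ (sq_nonneg σ)
  simp only [gaussianPDFReal, hv, sub_zero]
  have hC : (0:ℝ) < (Real.sqrt (2 * π * σ^2))⁻¹ := by positivity
  have h2v : (0:ℝ) < 2 * σ^2 := by positivity
  have hle : rexp (-(x-1)^2 / (2 * σ^2)) * rexp ε ≤ rexp (-x^2 / (2 * σ^2)) := by
    rw [← Real.exp_add]
    apply Real.exp_le_exp.mpr
    rw [← sub_nonneg]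
    have heq : -x^2 / (2 * σ^2) - (-(x - 1)^2 / (2 * σ^2) + ε)
        = ((x-1)^2 - x^2 - 2 * σ^2 * ε) / (2 * σ^2) := by field_simp; ring
    rw [heq]
    apply div_nonneg _ h2v.le
    nlinarith
  exact le_of_eq_of_le (by ring) (mul_le_mul_of_nonneg_left hle hC.le)

/-- Balle–Wang Gaussian mechanism bound, sensitivity 1: for `σ > 0`, `ε > 0`
and `δ = Φ(−εσ + 1/(2σ)) − e^ε Φ(−εσ − 1/(2σ))`, every measurable set `S ⊆ ℝ` satisfies
`N(0,σ²)(S) ≤ e^ε · N(1,σ²)(S) + δ`. -/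
theorem gaussian_mechanism_dp (σ ε : ℝ) (hσ : 0 < σ) (hε : 0 < ε) (δ : ℝ)
    (hδ : δ = stdGaussianCDF (-ε * σ + 1 / (2 * σ)) -
        Real.exp ε * stdGaussianCDF (-ε * σ - 1 / (2 * σ))) :
    ∀ S : Set ℝ, MeasurableSet S →
      gaussianReal 0 (Real.toNNReal (σ ^ 2)) S ≤
        ENNReal.ofReal (Real.exp ε) * gaussianReal 1 (Real.toNNReal (σ ^ 2)) S +
          ENNReal.ofReal δ := by
  intro S hS
  set v : NNReal := Real.toNNReal (σ^2) with hvdef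
  have hvne : v ≠ 0 := by
    rw [hvdef, ← NNReal.coe_ne_zero, Real.coe_toNNReal _ (sq_nonneg σ)]
    positivity
  set μ0 := gaussianReal 0 v with hμ0
  set μ1 := gaussianReal 1 v with hμ1
  set t : ℝ := 1/2 - ε * σ^2 with ht
  set A : Set ℝ := Set.Iic t with hA
  have hAm : MeasurableSet A := measurableSet_Iic
  set E : ENNReal := ENNReal.ofReal (Real.exp ε) with hE
  -- CDF computations
  have hμ0A : μ0 A = ENNReal.ofReal (stdGaussianCDF (-ε * σ + 1 / (2 * σ))) := by
    rw [hμ0, hA, gauss_Iic σ hσ 0 t, stdGaussianCDF,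
      ENNReal.ofReal_toReal (measure_ne_top _ _)]
    congr 2
    rw [ht]
    field_simp
    ring
  have hμ1A : μ1 A = ENNReal.ofReal (stdGaussianCDF (-ε * σ - 1 / (2 * σ))) := by
    rw [hμ1, hA, gauss_Iic σ hσ 1 t, stdGaussianCDF,
      ENNReal.ofReal_toReal (measure_ne_top _ _)]
    congr 2
    rw [ht]
    field_simp
    ring
  -- density comparison on complements
  have key1 : μ0 (S \ A) ≤ E * μ1 (S \ A) := by
    rw [hμ0, hμ1, gaussianReal_apply _ hvne, gaussianReal_apply _ hvne,
      ← lintegral_const_mul _ (measurable_gaussianPDF 1 v)]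
    apply setLIntegral_mono ((measurable_gaussianPDF 1 v).const_mul E)
    intro x hx
    have hxt : t ≤ x := le_of_lt (lt_of_not_ge hx.2)
    rw [gaussianPDF, gaussianPDF, hE, ← ENNReal.ofReal_mul (Real.exp_nonneg ε)]
    exact ENNReal.ofReal_le_ofReal (pdf_compare σ ε x hσ hxt)
  have key2 : E * μ1 (A \ S) ≤ μ0 (A \ S) := by
    rw [hμ0, hμ1, gaussianReal_apply _ hvne, gaussianReal_apply _ hvne,
      ← lintegral_const_mul _ (measurable_gaussianPDF 1 v)]
    apply setLIntegral_mono (measurable_gaussianPDF 0 v)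
    intro x hx
    have hxt : x ≤ t := hx.1
    rw [gaussianPDF, gaussianPDF, hE, ← ENNReal.ofReal_mul (Real.exp_nonneg ε)]
    exact ENNReal.ofReal_le_ofReal (pdf_compare' σ ε x hσ hxt)
  -- δ bound on A
  have hδA : μ0 A ≤ E * μ1 A + ENNReal.ofReal δ := by
    have h1 : μ0 A = ENNReal.ofReal (Real.exp ε * stdGaussianCDF (-ε * σ - 1 / (2 * σ)) + δ) := by
      rw [hμ0A, hδ]; ring_nf
    rw [h1]
    refine le_trans (ENNReal.ofReal_add_le) ?_
    gcongr
    rw [hμ1A, hE, ← ENNReal.ofReal_mul (Real.exp_nonneg ε)]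
  -- combine
  have hS0 : μ0 S = μ0 (S ∩ A) + μ0 (S \ A) := (measure_inter_add_diff S hAm).symm
  have hS1 : μ1 S = μ1 (S ∩ A) + μ1 (S \ A) := (measure_inter_add_diff S hAm).symm
  have hA0 : μ0 A = μ0 (S ∩ A) + μ0 (A \ S) := by
    rw [Set.inter_comm]; exact (measure_inter_add_diff A hS).symm
  have hA1 : μ1 A = μ1 (S ∩ A) + μ1 (A \ S) := by
    rw [Set.inter_comm]; exact (measure_inter_add_diff A hS).symm
  have hfin : E * μ1 (A \ S) ≠ ⊤ :=
    ENNReal.mul_ne_top ENNReal.ofReal_ne_top (measure_ne_top _ _)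
  have main : μ0 (S ∩ A) ≤ E * μ1 (S ∩ A) + ENNReal.ofReal δ := by
    rw [← ENNReal.add_le_add_iff_right hfin]
    calc μ0 (S ∩ A) + E * μ1 (A \ S) ≤ μ0 (S ∩ A) + μ0 (A \ S) := by gcongr
      _ = μ0 A := hA0.symm
      _ ≤ E * μ1 A + ENNReal.ofReal δ := hδA
      _ = E * μ1 (S ∩ A) + ENNReal.ofReal δ + E * μ1 (A \ S) := by
          rw [hA1, mul_add]; ring
  calc μ0 S = μ0 (S ∩ A) + μ0 (S \ A) := hS0
    _ ≤ (E * μ1 (S ∩ A) + ENNReal.ofReal δ) + E * μ1 (S \ A) := add_le_add main key1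
    _ = E * μ1 S + ENNReal.ofReal δ := by rw [hS1, mul_add]; ring
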